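/- arXiv:2201.06110 — 2 statements merged into one kernel-verified Lean document; each statement's English description precedes it below -/
import Mathlib

section
/- Let p ∈ ℕ, ϱ ∈ [0,1), s > 0 and ϖ > 0. Let Δ = [δ_{ii′}] ∈ ℝ^{p×p} be symmetric with max_{1≤i≤p} ∑_{i′=1}^p |δ_{ii′}|^ϱ ≤ s (convention 0^0 = 0), and let Δ̂ ∈ ℝ^{p×p} be symmetric with |Δ̂_{·j}|_1 ≤ |Δ_{·j}|_1 for every column j and |Δ̂ − Δ|_∞ ≤ ϖ. Then ‖Δ̂ − Δ‖ ≤ ‖Δ̂ − Δ‖_1 ≤ 12 s ϖ^{1−ϱ}. -/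
open Matrix
open scoped Classical

/-- Maximum absolute column-sum norm `‖M‖₁ = max_j ∑_i |M i j|`. -/
noncomputable def colOneNorm {p : ℕ} (M : Matrix (Fin p) (Fin p) ℝ) : ℝ :=
  ⨆ j : Fin p, ∑ i, |M i j|

/-- Spectral norm (largest singular value) of a square real matrix. -/
noncomputable def specNormR {p : ℕ} (M : Matrix (Fin p) (Fin p) ℝ) : ℝ :=
  ‖Matrix.toEuclideanCLM (𝕜 := ℝ) M‖

lemma specNormR_le_of_bounds {p : ℕ} (M : Matrix (Fin p) (Fin p) ℝ) (B : ℝ) (hB : 0 ≤ B)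
    (hcol : ∀ j, (∑ i, |M i j|) ≤ B) (hrow : ∀ i, (∑ j, |M i j|) ≤ B) :
    specNormR M ≤ B := by
  refine ContinuousLinearMap.opNorm_le_bound _ hB fun x => ?_
  have hx2 : ‖x‖ ^ 2 = ∑ j, (x j) ^ 2 := by
    rw [EuclideanSpace.norm_eq, Real.sq_sqrt (Finset.sum_nonneg fun _ _ => sq_nonneg _)]
    simp [Real.norm_eq_abs, sq_abs]
  set y := Matrix.toEuclideanCLM (𝕜 := ℝ) M x with hy
  have hyi : ∀ i, y i = ∑ j, M i j * x j := by
    intro i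
    have h2 := congrFun (Matrix.ofLp_toEuclideanCLM (𝕜 := ℝ) M x) i
    exact h2
  have hyn : ‖y‖ ^ 2 = ∑ i, (y i) ^ 2 := by
    rw [EuclideanSpace.norm_eq, Real.sq_sqrt (Finset.sum_nonneg fun _ _ => sq_nonneg _)]
    simp [Real.norm_eq_abs, sq_abs]
  have key : ∑ i, (y i) ^ 2 ≤ B ^ 2 * ∑ j, (x j) ^ 2 := by
    calc ∑ i, (y i) ^ 2
        ≤ ∑ i, (∑ j, |M i j| * |x j|) ^ 2 := by
          refine Finset.sum_le_sum fun i _ => ?_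
          rw [hyi]
          have h1 : |∑ j, M i j * x j| ≤ ∑ j, |M i j| * |x j| := by
            refine (Finset.abs_sum_le_sum_abs _ _).trans (le_of_eq ?_)
            simp [abs_mul]
          calc (∑ j, M i j * x j) ^ 2 = |∑ j, M i j * x j| ^ 2 := (sq_abs _).symm
            _ ≤ (∑ j, |M i j| * |x j|) ^ 2 := by
                exact pow_le_pow_left₀ (abs_nonneg _) h1 2
      _ ≤ ∑ i, (∑ j, |M i j|) * (∑ j, |M i j| * (x j) ^ 2) := by
          refine Finset.sum_le_sum fun i _ => ?_
          refine Finset.sum_sq_le_sum_mul_sum_of_sq_eq_mul _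
            (fun j _ => abs_nonneg _)
            (fun j _ => mul_nonneg (abs_nonneg _) (sq_nonneg _))
            (fun j _ => ?_)
          rw [mul_pow, sq_abs (x j)]
          ring
      _ ≤ ∑ i, B * (∑ j, |M i j| * (x j) ^ 2) := by
          refine Finset.sum_le_sum fun i _ => ?_
          exact mul_le_mul_of_nonneg_right (hrow i)
            (Finset.sum_nonneg fun j _ => mul_nonneg (abs_nonneg _) (sq_nonneg _))
      _ = B * ∑ j, (∑ i, |M i j|) * (x j) ^ 2 := by
          rw [← Finset.mul_sum, Finset.sum_comm]
          congr 1
          refine Finset.sum_congr rfl fun j _ => ?_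
          rw [Finset.sum_mul]
      _ ≤ B * ∑ j, B * (x j) ^ 2 := by
          refine mul_le_mul_of_nonneg_left (Finset.sum_le_sum fun j _ => ?_) hB
          exact mul_le_mul_of_nonneg_right (hcol j) (sq_nonneg _)
      _ = B ^ 2 * ∑ j, (x j) ^ 2 := by
          rw [← Finset.mul_sum]
          ring
  have h1 : ‖y‖ ^ 2 ≤ (B * ‖x‖) ^ 2 := by
    rw [hyn, mul_pow, hx2]
    exact key
  have h2 := Real.sqrt_le_sqrt h1
  rwa [Real.sqrt_sq (norm_nonneg _), Real.sqrt_sq (mul_nonneg hB (norm_nonneg _))] at h2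

theorem stmt13 (p : ℕ) (ϱ s ϖ : ℝ) (hϱ0 : 0 ≤ ϱ) (hϱ1 : ϱ < 1) (hs : 0 < s) (hϖ : 0 < ϖ)
    (Δ Δhat : Matrix (Fin p) (Fin p) ℝ) (hΔ : Δ.IsHermitian) (hΔhat : Δhat.IsHermitian)
    (hsparse : ∀ i, (∑ i', if Δ i i' = 0 then (0 : ℝ) else |Δ i i'| ^ ϱ) ≤ s)
    (hcol : ∀ j, (∑ i, |Δhat i j|) ≤ ∑ i, |Δ i j|)
    (hent : ∀ i j, |Δhat i j - Δ i j| ≤ ϖ) :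
    specNormR (Δhat - Δ) ≤ colOneNorm (Δhat - Δ) ∧
    colOneNorm (Δhat - Δ) ≤ 12 * s * ϖ ^ (1 - ϱ) := by
  set M := Δhat - Δ with hM
  set Q := ϖ ^ (1 - ϱ) with hQdef
  have hQpos : 0 < Q := Real.rpow_pos_of_pos hϖ _
  have hsQ : 0 < s * Q := mul_pos hs hQpos
  -- symmetry facts
  have hsymΔ : ∀ i i', Δ i i' = Δ i' i := by
    intro i i'
    have := congrFun (congrFun hΔ i') i
    simpa [Matrix.conjTranspose_apply] using this
  have hsymM : ∀ i i', M i i' = M i' i := by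
    intro i i'
    have h1 := congrFun (congrFun hΔhat i') i
    have h2 := congrFun (congrFun hΔ i') i
    simp only [Matrix.conjTranspose_apply, star_trivial] at h1 h2
    simp [hM, Matrix.sub_apply, h1, h2]
  have hsp : ∀ j, (∑ i, if Δ i j = 0 then (0 : ℝ) else |Δ i j| ^ ϱ) ≤ s := by
    intro j
    calc (∑ i, if Δ i j = 0 then (0 : ℝ) else |Δ i j| ^ ϱ)
        = ∑ i, if Δ j i = 0 then (0 : ℝ) else |Δ j i| ^ ϱ := by
          refine Finset.sum_congr rfl fun i _ => ?_
          rw [hsymΔ i j]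
      _ ≤ s := hsparse j
  -- main column bound
  have hcolbound : ∀ j, (∑ i, |M i j|) ≤ 4 * (s * Q) := by
    intro j
    set L : Finset (Fin p) := Finset.univ.filter fun i => ϖ < |Δ i j| with hL
    have hmemL : ∀ i, i ∈ L ↔ ϖ < |Δ i j| := by
      intro i; simp [hL]
    have hmemLc : ∀ i, i ∈ Lᶜ ↔ |Δ i j| ≤ ϖ := by
      intro i; simp [hL, not_lt]
    -- cardinality bound
    have hcard : (L.card : ℝ) * ϖ ^ ϱ ≤ s := by
      calc (L.card : ℝ) * ϖ ^ ϱ = ∑ _i ∈ L, ϖ ^ ϱ := by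
            rw [Finset.sum_const, nsmul_eq_mul]
        _ ≤ ∑ i ∈ L, (if Δ i j = 0 then (0 : ℝ) else |Δ i j| ^ ϱ) := by
            refine Finset.sum_le_sum fun i hi => ?_
            have hi' : ϖ < |Δ i j| := (hmemL i).1 hi
            have hne : Δ i j ≠ 0 := by
              intro h
              rw [h, abs_zero] at hi'
              linarith
            rw [if_neg hne]
            exact Real.rpow_le_rpow hϖ.le hi'.le hϱ0
        _ ≤ ∑ i, (if Δ i j = 0 then (0 : ℝ) else |Δ i j| ^ ϱ) := by
            refine Finset.sum_le_sum_of_subset_of_nonneg (Finset.subset_univ _) fun i _ _ => ?_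
            split_ifs
            · exact le_rfl
            · exact Real.rpow_nonneg (abs_nonneg _) _
        _ ≤ s := hsp j
    have hcardϖ : (L.card : ℝ) * ϖ ≤ s * Q := by
      have hP : (0 : ℝ) < ϖ ^ ϱ := Real.rpow_pos_of_pos hϖ _
      have hPQ : ϖ ^ ϱ * Q = ϖ := by
        rw [hQdef, ← Real.rpow_add hϖ]
        norm_num
      nlinarith [mul_le_mul_of_nonneg_right hcard hQpos.le]
    -- small entries bound for Δ
    have hSsum : ∑ i ∈ Lᶜ, |Δ i j| ≤ s * Q := by
      calc ∑ i ∈ Lᶜ, |Δ i j|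
          ≤ ∑ i ∈ Lᶜ, (if Δ i j = 0 then (0 : ℝ) else |Δ i j| ^ ϱ) * Q := by
            refine Finset.sum_le_sum fun i hi => ?_
            have hle : |Δ i j| ≤ ϖ := (hmemLc i).1 hi
            by_cases h0 : Δ i j = 0
            · simp [h0]
            · rw [if_neg h0]
              have h1 : |Δ i j| = |Δ i j| ^ ϱ * |Δ i j| ^ (1 - ϱ) := by
                rw [← Real.rpow_add (abs_pos.2 h0)]
                norm_num
              have h2 : |Δ i j| ^ (1 - ϱ) ≤ ϖ ^ (1 - ϱ) :=
                Real.rpow_le_rpow (abs_nonneg _) hle (by linarith)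
              calc |Δ i j| = |Δ i j| ^ ϱ * |Δ i j| ^ (1 - ϱ) := h1
                _ ≤ |Δ i j| ^ ϱ * Q := by
                    rw [hQdef]
                    exact mul_le_mul_of_nonneg_left h2 (Real.rpow_nonneg (abs_nonneg _) _)
        _ = (∑ i ∈ Lᶜ, if Δ i j = 0 then (0 : ℝ) else |Δ i j| ^ ϱ) * Q := by
            rw [Finset.sum_mul]
        _ ≤ s * Q := by
            refine mul_le_mul_of_nonneg_right ?_ hQpos.le
            calc (∑ i ∈ Lᶜ, if Δ i j = 0 then (0 : ℝ) else |Δ i j| ^ ϱ)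
                ≤ ∑ i, (if Δ i j = 0 then (0 : ℝ) else |Δ i j| ^ ϱ) := by
                  refine Finset.sum_le_sum_of_subset_of_nonneg (Finset.subset_univ _)
                    fun i _ _ => ?_
                  split_ifs
                  · exact le_rfl
                  · exact Real.rpow_nonneg (abs_nonneg _) _
              _ ≤ s := hsp j
    -- large entries: Δ column on L vs Δhat on L
    have hLdelta : ∑ i ∈ L, |Δ i j| ≤ ∑ i ∈ L, |Δhat i j| + (L.card : ℝ) * ϖ := by
      have hstep : ∀ i ∈ L, |Δ i j| ≤ |Δhat i j| + ϖ := by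
        intro i _
        have h1 := abs_sub_abs_le_abs_sub (Δ i j) (Δhat i j)
        have h2 : |Δ i j - Δhat i j| = |Δhat i j - Δ i j| := abs_sub_comm _ _
        have h3 := hent i j
        linarith
      calc ∑ i ∈ L, |Δ i j| ≤ ∑ i ∈ L, (|Δhat i j| + ϖ) := Finset.sum_le_sum hstep
        _ = ∑ i ∈ L, |Δhat i j| + (L.card : ℝ) * ϖ := by
            rw [Finset.sum_add_distrib, Finset.sum_const, nsmul_eq_mul]
    have hsplitΔ : ∑ i ∈ Lᶜ, |Δ i j| + ∑ i ∈ L, |Δ i j| = ∑ i, |Δ i j| :=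
      Finset.sum_compl_add_sum L _
    have hsplitΔhat : ∑ i ∈ Lᶜ, |Δhat i j| + ∑ i ∈ L, |Δhat i j| = ∑ i, |Δhat i j| :=
      Finset.sum_compl_add_sum L _
    have hhatS : ∑ i ∈ Lᶜ, |Δhat i j| ≤ ∑ i ∈ Lᶜ, |Δ i j| + (L.card : ℝ) * ϖ := by
      have := hcol j
      linarith
    -- assemble
    have hsplitM : ∑ i ∈ Lᶜ, |M i j| + ∑ i ∈ L, |M i j| = ∑ i, |M i j| :=
      Finset.sum_compl_add_sum L _
    have hML : ∑ i ∈ L, |M i j| ≤ (L.card : ℝ) * ϖ := by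
      calc ∑ i ∈ L, |M i j| ≤ ∑ _i ∈ L, ϖ := by
            refine Finset.sum_le_sum fun i _ => ?_
            simpa [hM, Matrix.sub_apply] using hent i j
        _ = (L.card : ℝ) * ϖ := by rw [Finset.sum_const, nsmul_eq_mul]
    have hMS : ∑ i ∈ Lᶜ, |M i j| ≤ ∑ i ∈ Lᶜ, |Δhat i j| + ∑ i ∈ Lᶜ, |Δ i j| := by
      rw [← Finset.sum_add_distrib]
      refine Finset.sum_le_sum fun i _ => ?_
      simpa [hM, Matrix.sub_apply] using abs_sub (Δhat i j) (Δ i j)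
    linarith
  constructor
  · -- spectral norm ≤ column norm
    have hbdd : BddAbove (Set.range fun j : Fin p => ∑ i, |M i j|) :=
      Set.Finite.bddAbove (Set.finite_range _)
    have hcolB : ∀ j, (∑ i, |M i j|) ≤ colOneNorm M := fun j => le_ciSup hbdd j
    have hrowB : ∀ i, (∑ j, |M i j|) ≤ colOneNorm M := by
      intro i
      calc ∑ j, |M i j| = ∑ j, |M j i| := by
            refine Finset.sum_congr rfl fun j _ => ?_
            rw [hsymM i j]
        _ ≤ colOneNorm M := hcolB i
    have hB0 : 0 ≤ colOneNorm M := by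
      by_cases hp : p = 0
      · subst hp
        rw [colOneNorm, Real.iSup_of_isEmpty]
      · have : Nonempty (Fin p) := ⟨⟨0, Nat.pos_of_ne_zero hp⟩⟩
        obtain ⟨j⟩ := this
        exact le_trans (Finset.sum_nonneg fun i _ => abs_nonneg _) (hcolB j)
    exact specNormR_le_of_bounds M _ hB0 hcolB hrowB
  · -- column norm bound
    by_cases hp : p = 0
    · subst hp
      rw [colOneNorm, Real.iSup_of_isEmpty]
      nlinarith
    · have : Nonempty (Fin p) := ⟨⟨0, Nat.pos_of_ne_zero hp⟩⟩
      refine ciSup_le fun j => ?_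
      have := hcolbound j
      nlinarith
end

section
/- Let p ∈ ℕ, A, Â ∈ ℝ^{p×p}, and Δ, Δ̂ ∈ ℝ^{p×p} with Δ symmetric. Suppose for some η > 0 and ε_A ≥ 0 that |Δ̂ − Δ|_∞ ≤ 4‖Δ‖_1 η and ‖Â − A‖_1 ≤ ε_A ≤ ‖A‖_1. Define the long-run partial covariance matrices Ω := 2π A^⊤ΔA and Ω̂ := 2π Â^⊤Δ̂Â. Then |Ω̂ − Ω|_∞ ≤ 4π ‖A‖_1 (3‖Δ‖ ε_A + 16 ‖A‖_1 ‖Δ‖_1 η). -/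
open Matrix

lemma colSum_le_colOneNorm {p : ℕ} (M : Matrix (Fin p) (Fin p) ℝ) (j : Fin p) :
    ∑ i, |M i j| ≤ colOneNorm M :=
  le_ciSup (f := fun j => ∑ i, |M i j|) (Set.Finite.bddAbove (Set.finite_range _)) j

lemma colOneNorm_nonneg {p : ℕ} [Nonempty (Fin p)] (M : Matrix (Fin p) (Fin p) ℝ) :
    0 ≤ colOneNorm M :=
  le_trans (Finset.sum_nonneg fun i _ => abs_nonneg _)
    (colSum_le_colOneNorm M (Classical.arbitrary _))

/-- ℓ² norm bounded by ℓ¹ norm. -/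
lemma l2_le_l1 {p : ℕ} (x : Fin p → ℝ) :
    ‖(WithLp.equiv 2 (Fin p → ℝ)).symm x‖ ≤ ∑ i, |x i| := by
  rw [EuclideanSpace.norm_eq]
  have h1 : ∑ i, ‖((WithLp.equiv 2 (Fin p → ℝ)).symm x) i‖ ^ 2 ≤ (∑ i, |x i|) ^ 2 := by
    have := Finset.sum_sq_le_sq_sum_of_nonneg (s := Finset.univ)
      (f := fun i => |x i|) (fun i _ => abs_nonneg _)
    simpa [Real.norm_eq_abs] using this
  calc Real.sqrt (∑ i, ‖((WithLp.equiv 2 (Fin p → ℝ)).symm x) i‖ ^ 2)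
      ≤ Real.sqrt ((∑ i, |x i|) ^ 2) := Real.sqrt_le_sqrt h1
    _ = ∑ i, |x i| := Real.sqrt_sq (Finset.sum_nonneg fun i _ => abs_nonneg _)

/-- Quadratic form bound via spectral norm and ℓ¹ norms. -/
lemma quad_bound {p : ℕ} (M : Matrix (Fin p) (Fin p) ℝ) (x y : Fin p → ℝ) :
    |∑ k, ∑ l, x k * M k l * y l| ≤ specNormR M * (∑ k, |x k|) * (∑ l, |y l|) := by
  set x' : EuclideanSpace ℝ (Fin p) := (WithLp.equiv 2 (Fin p → ℝ)).symm x
  set y' : EuclideanSpace ℝ (Fin p) := (WithLp.equiv 2 (Fin p → ℝ)).symm y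
  have key : ∑ k, ∑ l, x k * M k l * y l
      = inner ℝ x' (Matrix.toEuclideanCLM (𝕜 := ℝ) M y') := by
    rw [show (Matrix.toEuclideanCLM (𝕜 := ℝ) M) y'
        = (WithLp.equiv 2 (Fin p → ℝ)).symm (M.mulVec y) from
      Matrix.toEuclideanCLM_toLp M y]
    simp only [x', PiLp.inner_apply, WithLp.equiv_symm_apply, PiLp.toLp_apply, RCLike.inner_apply,
      starRingEnd_apply, star_trivial, Matrix.mulVec, dotProduct]
    rw [Finset.sum_congr rfl]
    intro k _
    rw [Finset.sum_mul]
    exact Finset.sum_congr rfl fun l _ => by ring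
  rw [key]
  calc |inner ℝ x' (Matrix.toEuclideanCLM (𝕜 := ℝ) M y')|
      ≤ ‖x'‖ * ‖Matrix.toEuclideanCLM (𝕜 := ℝ) M y'‖ := abs_real_inner_le_norm _ _
    _ ≤ ‖x'‖ * (specNormR M * ‖y'‖) := by
        gcongr; exact ContinuousLinearMap.le_opNorm _ _
    _ ≤ (∑ k, |x k|) * (specNormR M * (∑ l, |y l|)) := by
        gcongr
        · exact mul_nonneg (norm_nonneg _) (norm_nonneg _)
        · exact l2_le_l1 x
        · exact norm_nonneg _
        · exact l2_le_l1 y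
    _ = specNormR M * (∑ k, |x k|) * (∑ l, |y l|) := by ring

lemma entry_eq {p : ℕ} (X M Y : Matrix (Fin p) (Fin p) ℝ) (i j : Fin p) :
    (Xᵀ * M * Y) i j = ∑ k, ∑ l, X k i * M k l * Y l j := by
  simp only [Matrix.mul_apply, Matrix.transpose_apply, Finset.sum_mul, Finset.mul_sum]
  rw [Finset.sum_comm]

theorem stmt14 (p : ℕ) (η εA : ℝ) (hη : 0 < η) (hεA : 0 ≤ εA)
    (A Ahat Δ Δhat : Matrix (Fin p) (Fin p) ℝ) (hΔ : Δ.IsHermitian)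
    (hΔd : ∀ i j, |Δhat i j - Δ i j| ≤ 4 * colOneNorm Δ * η)
    (hA1 : colOneNorm (Ahat - A) ≤ εA) (hA2 : εA ≤ colOneNorm A) :
    ∀ i j,
      |((2 * Real.pi) • (Ahatᵀ * Δhat * Ahat)) i j -
          ((2 * Real.pi) • (Aᵀ * Δ * A)) i j| ≤
        4 * Real.pi * colOneNorm A *
          (3 * specNormR Δ * εA + 16 * colOneNorm A * colOneNorm Δ * η) := by
  intro i j
  have : Nonempty (Fin p) := ⟨i⟩
  set E := Ahat - A with hE
  set D := Δhat - Δ with hD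
  set NA := colOneNorm A with hNA
  set ND := colOneNorm Δ with hND
  set S := specNormR Δ with hS
  have hNA0 : 0 ≤ NA := colOneNorm_nonneg A
  have hND0 : 0 ≤ ND := by
    have := hΔd i j
    nlinarith [abs_nonneg (Δhat i j - Δ i j), hη]
  have hS0 : 0 ≤ S := norm_nonneg _
  -- column absolute sums
  have hAcol : ∀ m : Fin p, ∑ k, |A k m| ≤ NA := fun m => colSum_le_colOneNorm A m
  have hEcol : ∀ m : Fin p, ∑ k, |E k m| ≤ εA := fun m =>
    le_trans (colSum_le_colOneNorm E m) hA1
  have hAhcol : ∀ m : Fin p, ∑ k, |Ahat k m| ≤ NA + εA := by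
    intro m
    have h : ∀ k, |Ahat k m| ≤ |A k m| + |E k m| := by
      intro k
      have : Ahat k m = A k m + E k m := by simp [hE]
      rw [this]; exact abs_add_le _ _
    calc ∑ k, |Ahat k m| ≤ ∑ k, (|A k m| + |E k m|) := Finset.sum_le_sum fun k _ => h k
      _ = (∑ k, |A k m|) + ∑ k, |E k m| := Finset.sum_add_distrib
      _ ≤ NA + εA := add_le_add (hAcol m) (hEcol m)
  -- decomposition
  have hdec : (Ahatᵀ * Δhat * Ahat) i j - (Aᵀ * Δ * A) i j
      = ((Aᵀ * Δ * E) i j + (Eᵀ * Δ * A) i j + (Eᵀ * Δ * E) i j)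
        + (Ahatᵀ * D * Ahat) i j := by
    have h1 : Ahat = A + E := by simp [hE]
    have h2 : Δhat = Δ + D := by simp [hD]
    rw [h1, h2]
    simp only [Matrix.transpose_add, Matrix.add_mul, Matrix.mul_add, Matrix.add_apply]
    ring
  -- bound each term via quad_bound
  have t1 : |(Aᵀ * Δ * E) i j| ≤ S * NA * εA := by
    rw [entry_eq]
    calc |∑ k, ∑ l, A k i * Δ k l * E l j|
        ≤ S * (∑ k, |A k i|) * (∑ l, |E l j|) := quad_bound Δ _ _
      _ ≤ S * NA * εA :=
          mul_le_mul (mul_le_mul_of_nonneg_left (hAcol i) hS0) (hEcol j)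
            (Finset.sum_nonneg fun k _ => abs_nonneg _) (mul_nonneg hS0 hNA0)
  have t2 : |(Eᵀ * Δ * A) i j| ≤ S * εA * NA := by
    rw [entry_eq]
    calc |∑ k, ∑ l, E k i * Δ k l * A l j|
        ≤ S * (∑ k, |E k i|) * (∑ l, |A l j|) := quad_bound Δ _ _
      _ ≤ S * εA * NA :=
          mul_le_mul (mul_le_mul_of_nonneg_left (hEcol i) hS0) (hAcol j)
            (Finset.sum_nonneg fun k _ => abs_nonneg _) (mul_nonneg hS0 hεA)
  have t3 : |(Eᵀ * Δ * E) i j| ≤ S * εA * εA := by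
    rw [entry_eq]
    calc |∑ k, ∑ l, E k i * Δ k l * E l j|
        ≤ S * (∑ k, |E k i|) * (∑ l, |E l j|) := quad_bound Δ _ _
      _ ≤ S * εA * εA :=
          mul_le_mul (mul_le_mul_of_nonneg_left (hEcol i) hS0) (hEcol j)
            (Finset.sum_nonneg fun k _ => abs_nonneg _) (mul_nonneg hS0 hεA)
  have t4 : |(Ahatᵀ * D * Ahat) i j| ≤ (4 * ND * η) * ((NA + εA) * (NA + εA)) := by
    rw [entry_eq]
    calc |∑ k, ∑ l, Ahat k i * D k l * Ahat l j|
        ≤ ∑ k, ∑ l, |Ahat k i * D k l * Ahat l j| := by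
          refine le_trans (Finset.abs_sum_le_sum_abs _ _) ?_
          exact Finset.sum_le_sum fun k _ => Finset.abs_sum_le_sum_abs _ _
      _ ≤ ∑ k, ∑ l, |Ahat k i| * (4 * ND * η) * |Ahat l j| := by
          refine Finset.sum_le_sum fun k _ => Finset.sum_le_sum fun l _ => ?_
          rw [abs_mul, abs_mul]
          exact mul_le_mul_of_nonneg_right
            (mul_le_mul_of_nonneg_left (hΔd k l) (abs_nonneg _)) (abs_nonneg _)
      _ = (4 * ND * η) * ((∑ k, |Ahat k i|) * (∑ l, |Ahat l j|)) := by
          rw [Finset.sum_mul_sum, Finset.mul_sum]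
          refine Finset.sum_congr rfl fun k _ => ?_
          rw [Finset.mul_sum]
          exact Finset.sum_congr rfl fun l _ => by ring
      _ ≤ (4 * ND * η) * ((NA + εA) * (NA + εA)) := by
          refine mul_le_mul_of_nonneg_left ?_ (by positivity)
          exact mul_le_mul (hAhcol i) (hAhcol j)
            (Finset.sum_nonneg fun k _ => abs_nonneg _) (by linarith)
  -- combine
  have hπ : (0:ℝ) < Real.pi := Real.pi_pos
  have hmain : |(Ahatᵀ * Δhat * Ahat) i j - (Aᵀ * Δ * A) i j|
      ≤ 3 * S * NA * εA + 16 * ND * η * NA * NA := by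
    rw [hdec]
    have hsq : (NA + εA) * (NA + εA) ≤ 4 * (NA * NA) := by nlinarith
    have t4' : |(Ahatᵀ * D * Ahat) i j| ≤ 16 * ND * η * NA * NA := by
      refine le_trans t4 ?_
      calc (4 * ND * η) * ((NA + εA) * (NA + εA))
          ≤ (4 * ND * η) * (4 * (NA * NA)) :=
            mul_le_mul_of_nonneg_left hsq (by positivity)
        _ = 16 * ND * η * NA * NA := by ring
    have t3' : |(Eᵀ * Δ * E) i j| ≤ S * NA * εA := by
      refine le_trans t3 ?_
      have : S * εA * εA ≤ S * εA * NA :=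
        mul_le_mul_of_nonneg_left hA2 (mul_nonneg hS0 hεA)
      linarith [this, mul_comm (S * εA) NA]
      -- fallback
    have t2' : |(Eᵀ * Δ * A) i j| ≤ S * NA * εA := by
      refine le_trans t2 (le_of_eq (by ring))
    have habs := abs_add_le ((Aᵀ * Δ * E) i j + (Eᵀ * Δ * A) i j + (Eᵀ * Δ * E) i j)
      ((Ahatᵀ * D * Ahat) i j)
    have habs2 := abs_add_le ((Aᵀ * Δ * E) i j + (Eᵀ * Δ * A) i j) ((Eᵀ * Δ * E) i j)
    have habs3 := abs_add_le ((Aᵀ * Δ * E) i j) ((Eᵀ * Δ * A) i j)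
    linarith
  have hsmul : ((2 * Real.pi) • (Ahatᵀ * Δhat * Ahat)) i j -
      ((2 * Real.pi) • (Aᵀ * Δ * A)) i j
      = (2 * Real.pi) * ((Ahatᵀ * Δhat * Ahat) i j - (Aᵀ * Δ * A) i j) := by
    simp [Matrix.smul_apply, mul_sub]
  rw [hsmul, abs_mul, abs_of_pos (by positivity : (0:ℝ) < 2 * Real.pi)]
  calc (2 * Real.pi) * |(Ahatᵀ * Δhat * Ahat) i j - (Aᵀ * Δ * A) i j|
      ≤ (2 * Real.pi) * (3 * S * NA * εA + 16 * ND * η * NA * NA) := by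
        gcongr
    _ ≤ 4 * Real.pi * NA * (3 * S * εA + 16 * NA * ND * η) := by
        nlinarith [mul_nonneg hπ.le (mul_nonneg (mul_nonneg hS0 hNA0) hεA),
          mul_nonneg hπ.le (mul_nonneg (mul_nonneg (mul_nonneg hND0 hη.le) hNA0) hNA0)]
end
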